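/- Let V ⊂ ℝ[t] be a finite-dimensional subspace, I ⊆ ℝ an unbounded non-degenerate closed interval, P = {f ∈ V : f ≥ 0 on I}, and 0 ≠ f ∈ P. Then the linear span of the supporting face of f in P equals U_f = {g ∈ V : deg(g) ≤ deg(f) and ord_s(g) ≥ ord_s(f) for all s ∈ I}. -/

import Mathlib

open Polynomial Filter Set

section AuxLemmas

lemma near_point {I : Set ℝ} (hI : I = Set.univ ∨ (∃ a, I = Set.Ici a) ∨ ∃ a, I = Set.Iic a)
    {s : ℝ} (hs : s ∈ I) {δ : ℝ} (hδ : 0 < δ) :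
    ∃ x ∈ I, x ≠ s ∧ |x - s| < δ := by
  rcases hI with rfl | ⟨a, rfl⟩ | ⟨a, rfl⟩
  · refine ⟨s + δ/2, trivial, ne_of_gt (by linarith), ?_⟩
    rw [add_sub_cancel_left, abs_of_pos (by linarith)]; linarith
  · rw [Set.mem_Ici] at hs
    refine ⟨s + δ/2, Set.mem_Ici.mpr (by linarith), ne_of_gt (by linarith), ?_⟩
    rw [add_sub_cancel_left, abs_of_pos (by linarith)]; linarith
  · rw [Set.mem_Iic] at hs
    refine ⟨s - δ/2, Set.mem_Iic.mpr (by linarith), ne_of_lt (by linarith), ?_⟩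
    have : s - δ/2 - s = -(δ/2) := by ring
    rw [this, abs_neg, abs_of_pos (by linarith)]; linarith

lemma key_dvd {I : Set ℝ} (hI : I = Set.univ ∨ (∃ a, I = Set.Ici a) ∨ ∃ a, I = Set.Iic a)
    {s : ℝ} (hs : s ∈ I) {g h : ℝ[X]} (hg : ∀ x ∈ I, 0 ≤ g.eval x)
    (hh : ∀ x ∈ I, 0 ≤ h.eval x) {n : ℕ} (hd : (X - C s) ^ n ∣ g + h) :
    (X - C s) ^ n ∣ g := by
  by_cases hg0 : g = 0
  · simp [hg0]
  set k := rootMultiplicity s g with hk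
  by_cases hkn : n ≤ k
  · exact dvd_trans (pow_dvd_pow _ hkn) (g.pow_rootMultiplicity_dvd s)
  push_neg at hkn
  exfalso
  obtain ⟨u, hu⟩ : (X - C s) ^ (k + 1) ∣ g + h := dvd_trans (pow_dvd_pow _ hkn) hd
  set g₁ := g /ₘ (X - C s) ^ k with hg₁def
  have hgfac : (X - C s) ^ k * g₁ = g := g.pow_mul_divByMonic_rootMultiplicity_eq s
  have hg₁s : g₁.eval s ≠ 0 := eval_divByMonic_pow_rootMultiplicity_ne_zero s hg0
  set h₁ := (X - C s) * u - g₁ with hh₁def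
  have hhfac : (X - C s) ^ k * h₁ = h := by
    have : (X - C s) ^ k * ((X - C s) * u) = g + h := by rw [hu]; ring
    calc (X - C s) ^ k * h₁ = (X - C s) ^ k * ((X - C s) * u) - (X - C s) ^ k * g₁ := by ring
    _ = h := by rw [this, hgfac]; ring
  have hh₁s : h₁.eval s = -g₁.eval s := by simp [hh₁def]
  have hlt : ((g₁ * h₁).eval s) < 0 := by
    rw [eval_mul, hh₁s]
    nlinarith [mul_self_pos.mpr hg₁s]
  have hopen : IsOpen {x : ℝ | (g₁ * h₁).eval x < 0} :=
    isOpen_lt (g₁ * h₁).continuous_aeval continuous_const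
  obtain ⟨δ, hδ, hball⟩ := Metric.isOpen_iff.mp hopen s hlt
  obtain ⟨x, hxI, hxs, hxd⟩ := near_point hI hs hδ
  have hx : (g₁ * h₁).eval x < 0 := hball (by simpa [Real.dist_eq] using hxd)
  have h1 : 0 ≤ g.eval x * h.eval x := mul_nonneg (hg x hxI) (hh x hxI)
  rw [← hgfac, ← hhfac] at h1
  simp only [eval_mul, eval_pow, eval_sub, eval_X, eval_C] at h1 hx
  have hne : x - s ≠ 0 := sub_ne_zero.mpr hxs
  have hpo : 0 < (x - s) ^ k * (x - s) ^ k := mul_self_pos.mpr (pow_ne_zero _ hne)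
  nlinarith [mul_pos hpo (neg_pos.mpr hx)]

lemma eventually_neg_atBot {p : ℝ[X]} (hdeg : 0 < p.degree) (hEven : Even p.natDegree)
    (hlc : p.leadingCoeff < 0) : ∀ᶠ x in atBot, p.eval x < 0 := by
  set q := p.comp (-X : ℝ[X]) with hq
  have hnX : (-X : ℝ[X]).natDegree = 1 := by simp
  have hlcq : q.leadingCoeff = p.leadingCoeff := by
    rw [hq, leadingCoeff_comp (by rw [hnX]; norm_num)]
    simp [hEven.neg_one_pow]
  have hq0 : q ≠ 0 := fun h => by
    rw [h, leadingCoeff_zero] at hlcq; exact absurd hlcq.symm (ne_of_lt hlc)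
  have hndq : q.natDegree = p.natDegree := by rw [hq, natDegree_comp, hnX, mul_one]
  have hdq : 0 < q.degree := by
    rw [degree_eq_natDegree hq0, hndq]
    exact_mod_cast natDegree_pos_iff_degree_pos.mpr hdeg
  have ht : Tendsto (fun x => q.eval x) atTop atBot :=
    tendsto_atBot_of_leadingCoeff_nonpos q hdq (by rw [hlcq]; exact hlc.le)
  have hev : ∀ᶠ x in atTop, q.eval x < 0 := ht.eventually (eventually_lt_atBot 0)
  obtain ⟨b, hb⟩ := eventually_atTop.mp hev
  rw [eventually_atBot]
  refine ⟨-b, fun x hx => ?_⟩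
  have := hb (-x) (by linarith)
  rw [hq, eval_comp, eval_neg, eval_X, neg_neg] at this; exact this

lemma deg_le {I : Set ℝ} (hI : I = Set.univ ∨ (∃ a, I = Set.Ici a) ∨ ∃ a, I = Set.Iic a)
    {f g h : ℝ[X]} (hf0 : f ≠ 0) (hg : ∀ x ∈ I, 0 ≤ g.eval x)
    (hh : ∀ x ∈ I, 0 ≤ h.eval x) {c : ℝ} (hsum : g + h = c • f) :
    g.degree ≤ f.degree := by
  by_contra hlt
  push_neg at hlt
  have hg0 : g ≠ 0 := by
    intro h0; rw [h0, degree_zero] at hlt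
    exact absurd hlt (by simp)
  have hsumdeg : (g + h).degree ≤ f.degree := le_trans (hsum ▸ degree_smul_le c f) le_rfl
  have hh0 : h ≠ 0 := by
    intro h0; rw [h0, add_zero] at hsumdeg; exact absurd hsumdeg (not_le.mpr hlt)
  set d := g.natDegree with hd
  have hdg : g.degree = (d : WithBot ℕ) := degree_eq_natDegree hg0
  have hcoeff : (g + h).coeff d = 0 :=
    coeff_eq_zero_of_degree_lt (lt_of_le_of_lt hsumdeg (hdg ▸ hlt))
  have hhcoeff : h.coeff d = -g.leadingCoeff := by
    have := hcoeff; rw [coeff_add] at this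
    have : h.coeff d = -g.coeff d := by linarith
    rwa [← leadingCoeff] at this
  have hglc : g.leadingCoeff ≠ 0 := leadingCoeff_ne_zero.mpr hg0
  have hdh_le : h.degree ≤ (d : WithBot ℕ) := by
    have h1 : h = (g + h) - g := by ring
    calc h.degree = ((g + h) - g).degree := by rw [← h1]
    _ ≤ max (g + h).degree g.degree := degree_sub_le _ _
    _ ≤ (d : WithBot ℕ) := max_le (le_trans hsumdeg (le_of_lt (hdg ▸ hlt))) hdg.le
  have hdh_ge : d ≤ h.natDegree := le_natDegree_of_ne_zero (by rw [hhcoeff]; simpa using hglc)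
  have hndh : h.natDegree = d := le_antisymm (natDegree_le_iff_degree_le.mpr hdh_le) hdh_ge
  have hhlc : h.leadingCoeff = -g.leadingCoeff := by rw [leadingCoeff, hndh, hhcoeff]
  set p := g * h with hp
  have hp0 : p ≠ 0 := mul_ne_zero hg0 hh0
  have hplc : p.leadingCoeff = -(g.leadingCoeff ^ 2) := by
    rw [hp, leadingCoeff_mul, hhlc]; ring
  have hplcneg : p.leadingCoeff < 0 := by
    rw [hplc]; simpa using pow_pos (abs_pos.mpr hglc) 2 |>.trans_le (by rw [sq_abs])
  have hndp : p.natDegree = 2 * d := by rw [hp, natDegree_mul hg0 hh0, hndh]; ring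
  have hdpos : 0 < d :=
    natDegree_pos_iff_degree_pos.mpr (lt_of_le_of_lt (zero_le_degree_iff.mpr hf0) hlt)
  have hdegp : 0 < p.degree := by
    rw [degree_eq_natDegree hp0, hndp]
    exact_mod_cast by omega
  have hnonneg : ∀ x ∈ I, 0 ≤ p.eval x := fun x hx => by
    rw [hp, eval_mul]; exact mul_nonneg (hg x hx) (hh x hx)
  have hEven : Even p.natDegree := by rw [hndp]; exact even_two_mul d
  have htop : ∀ᶠ x in atTop, p.eval x < 0 :=
    (tendsto_atBot_of_leadingCoeff_nonpos p hdegp hplcneg.le).eventually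
      (eventually_lt_atBot 0)
  have hbot : ∀ᶠ x in atBot, p.eval x < 0 := eventually_neg_atBot hdegp hEven hplcneg
  rcases hI with rfl | ⟨a, rfl⟩ | ⟨a, rfl⟩
  · obtain ⟨b, hb⟩ := eventually_atTop.mp htop
    exact absurd (hnonneg b trivial) (not_le.mpr (hb b le_rfl))
  · obtain ⟨b, hb⟩ := eventually_atTop.mp htop
    exact absurd (hnonneg (max a b) (Set.mem_Ici.mpr (le_max_left _ _)))
      (not_le.mpr (hb _ (le_max_right _ _)))
  · obtain ⟨b, hb⟩ := eventually_atBot.mp hbot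
    exact absurd (hnonneg (min a b) (Set.mem_Iic.mpr (min_le_left _ _)))
      (not_le.mpr (hb _ (min_le_right _ _)))

lemma degree_comp_negX (p : ℝ[X]) : (p.comp (-X : ℝ[X])).degree = p.degree := by
  by_cases hp : p = 0
  · simp [hp]
  have hnX : (-X : ℝ[X]).natDegree = 1 := by simp
  have hlc : (p.comp (-X : ℝ[X])).leadingCoeff = p.leadingCoeff * (-1) ^ p.natDegree := by
    rw [leadingCoeff_comp (by rw [hnX]; norm_num)]; simp
  have h0 : p.comp (-X : ℝ[X]) ≠ 0 := by
    intro h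
    apply hp
    have hcc : (p.comp (-X : ℝ[X])).comp (-X : ℝ[X]) = p := by
      rw [comp_assoc]; simp
    rw [h, zero_comp] at hcc; exact hcc.symm
  rw [degree_eq_natDegree h0, degree_eq_natDegree hp, natDegree_comp, hnX, mul_one]

lemma tail_top {p q : ℝ[X]} (hdeg : p.degree ≤ q.degree) :
    ∃ M : ℝ, 0 < M ∧ ∀ᶠ x in atTop, |p.eval x| ≤ M * |q.eval x| := by
  obtain ⟨C, hC⟩ := Asymptotics.isBigO_iff.mp (p.isBigO_of_degree_le q hdeg)
  refine ⟨max C 1, lt_of_lt_of_le one_pos (le_max_right _ _), ?_⟩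
  filter_upwards [hC] with x hx
  calc |p.eval x| = ‖p.eval x‖ := rfl
  _ ≤ C * ‖q.eval x‖ := hx
  _ ≤ max C 1 * |q.eval x| :=
    mul_le_mul_of_nonneg_right (le_max_left _ _) (abs_nonneg _)

lemma tail_bot {p q : ℝ[X]} (hdeg : p.degree ≤ q.degree) :
    ∃ M : ℝ, 0 < M ∧ ∀ᶠ x in atBot, |p.eval x| ≤ M * |q.eval x| := by
  have hdeg' : (p.comp (-X : ℝ[X])).degree ≤ (q.comp (-X : ℝ[X])).degree := by
    rw [degree_comp_negX, degree_comp_negX]; exact hdeg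
  obtain ⟨M, hM, hev⟩ := tail_top hdeg'
  obtain ⟨b, hb⟩ := eventually_atTop.mp hev
  refine ⟨M, hM, eventually_atBot.mpr ⟨-b, fun x hx => ?_⟩⟩
  have := hb (-x) (by linarith)
  simpa [eval_comp] using this

lemma bound_cpt (p q : ℝ[X]) {a b : ℝ} (hq : ∀ x ∈ Icc a b, q.eval x ≠ 0) :
    ∃ M : ℝ, 0 < M ∧ ∀ x ∈ Icc a b, |p.eval x| ≤ M * |q.eval x| := by
  rcases isEmpty_or_nonempty (Icc a b) with he | hne
  · exact ⟨1, one_pos, fun x hx => absurd (Set.mem_setOf.mp hx) (by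
      have := he.false ⟨x, hx⟩; exact this.elim)⟩
  have hcpt : IsCompact (Icc a b) := isCompact_Icc
  have hnecc : (Icc a b).Nonempty := Set.nonempty_coe_sort.mp hne
  obtain ⟨x₀, hx₀m, hx₀⟩ := hcpt.exists_isMinOn hnecc
    ((continuous_abs.comp q.continuous_aeval).continuousOn)
  obtain ⟨x₁, hx₁m, hx₁⟩ := hcpt.exists_isMaxOn hnecc
    ((continuous_abs.comp p.continuous_aeval).continuousOn)
  set c := |q.eval x₀| with hc
  have hcpos : 0 < c := abs_pos.mpr (hq x₀ hx₀m)
  set Cp := |p.eval x₁| with hCp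
  refine ⟨(Cp + 1) / c, div_pos (by positivity) hcpos, fun x hx => ?_⟩
  have h1 : |p.eval x| ≤ Cp := hx₁ hx
  have h2 : c ≤ |q.eval x| := hx₀ hx
  have h3 : (Cp + 1) / c * c = Cp + 1 := div_mul_cancel₀ _ (ne_of_gt hcpos)
  nlinarith [div_pos (show (0:ℝ) < Cp + 1 by positivity) hcpos]

lemma bound_on {I : Set ℝ} (hI : I = Set.univ ∨ (∃ a, I = Set.Ici a) ∨ ∃ a, I = Set.Iic a)
    (p q : ℝ[X]) (hq : ∀ x ∈ I, q.eval x ≠ 0) (hdeg : p.degree ≤ q.degree) :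
    ∃ M : ℝ, 0 < M ∧ ∀ x ∈ I, |p.eval x| ≤ M * |q.eval x| := by
  obtain ⟨Mt, hMt, hevt⟩ := tail_top hdeg
  obtain ⟨Mb, hMb, hevb⟩ := tail_bot hdeg
  obtain ⟨bt, hbt⟩ := eventually_atTop.mp hevt
  obtain ⟨bb, hbb⟩ := eventually_atBot.mp hevb
  rcases hI with rfl | ⟨a, rfl⟩ | ⟨a, rfl⟩
  · obtain ⟨Mc, hMc, hcc⟩ := bound_cpt p q (a := bb) (b := bt) (fun x _ => hq x trivial)
    refine ⟨max (max Mt Mb) Mc, lt_of_lt_of_le hMc (le_max_right _ _), fun x _ => ?_⟩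
    rcases le_or_gt bt x with h | h
    · exact le_trans (hbt x h) (mul_le_mul_of_nonneg_right
        (le_trans (le_max_left _ _) (le_max_left _ _)) (abs_nonneg _))
    rcases le_or_gt x bb with h' | h'
    · exact le_trans (hbb x h') (mul_le_mul_of_nonneg_right
        (le_trans (le_max_right _ _) (le_max_left _ _)) (abs_nonneg _))
    · exact le_trans (hcc x ⟨h'.le, h.le⟩)
        (mul_le_mul_of_nonneg_right (le_max_right _ _) (abs_nonneg _))
  · obtain ⟨Mc, hMc, hcc⟩ := bound_cpt p q (a := a) (b := bt)
      (fun x hx => hq x (Set.mem_Ici.mpr hx.1))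
    refine ⟨max Mt Mc, lt_of_lt_of_le hMc (le_max_right _ _), fun x hx => ?_⟩
    rcases le_or_gt bt x with h | h
    · exact le_trans (hbt x h) (mul_le_mul_of_nonneg_right (le_max_left _ _) (abs_nonneg _))
    · exact le_trans (hcc x ⟨hx, h.le⟩)
        (mul_le_mul_of_nonneg_right (le_max_right _ _) (abs_nonneg _))
  · obtain ⟨Mc, hMc, hcc⟩ := bound_cpt p q (a := bb) (b := a)
      (fun x hx => hq x (Set.mem_Iic.mpr hx.2))
    refine ⟨max Mb Mc, lt_of_lt_of_le hMc (le_max_right _ _), fun x hx => ?_⟩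
    rcases le_or_gt x bb with h | h
    · exact le_trans (hbb x h) (mul_le_mul_of_nonneg_right (le_max_left _ _) (abs_nonneg _))
    · exact le_trans (hcc x ⟨h.le, hx⟩)
        (mul_le_mul_of_nonneg_right (le_max_right _ _) (abs_nonneg _))

end AuxLemmas

open Polynomial

/-- A face of a convex cone `C`. -/
def IsFace (C F : Set (Polynomial ℝ)) : Prop :=
  F ⊆ C ∧ (∀ c : ℝ, 0 ≤ c → ∀ x ∈ F, c • x ∈ F) ∧
    (∀ x ∈ F, ∀ y ∈ F, x + y ∈ F) ∧
    ∀ x ∈ C, ∀ y ∈ C, x + y ∈ F → x ∈ F ∧ y ∈ F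

/-- The supporting face of `f` in `C`: the smallest face of `C` containing `f`. -/
def IsSupportingFace (C : Set (Polynomial ℝ)) (f : Polynomial ℝ)
    (F : Set (Polynomial ℝ)) : Prop :=
  IsFace C F ∧ f ∈ F ∧ ∀ F', IsFace C F' → f ∈ F' → F ⊆ F'

theorem stmt_3 (V : Submodule ℝ (Polynomial ℝ)) [FiniteDimensional ℝ V]
    (I : Set ℝ)
    (hI : I = Set.univ ∨ (∃ a, I = Set.Ici a) ∨ ∃ a, I = Set.Iic a)
    (f : ℝ[X]) (hfV : f ∈ V) (hf0 : f ≠ 0)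
    (hfP : ∀ x ∈ I, 0 ≤ f.eval x) (F : Set ℝ[X])
    (hF : IsSupportingFace {g : ℝ[X] | g ∈ V ∧ ∀ x ∈ I, 0 ≤ g.eval x} f F) :
    (Submodule.span ℝ F : Set ℝ[X]) =
      {g : ℝ[X] | g ∈ V ∧ g.degree ≤ f.degree ∧
        ∀ s ∈ I, (X - C s) ^ (rootMultiplicity s f) ∣ g} := by
  classical
  set Pset : Set ℝ[X] := {g : ℝ[X] | g ∈ V ∧ ∀ x ∈ I, 0 ≤ g.eval x} with hPdef
  have hPadd : ∀ x ∈ Pset, ∀ y ∈ Pset, x + y ∈ Pset := by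
    rintro x ⟨hxV, hx⟩ y ⟨hyV, hy⟩
    exact ⟨add_mem hxV hyV, fun t ht => by
      simpa using add_nonneg (hx t ht) (hy t ht)⟩
  have hPsmul : ∀ c : ℝ, 0 ≤ c → ∀ x ∈ Pset, c • x ∈ Pset := by
    rintro c hc x ⟨hxV, hx⟩
    refine ⟨Submodule.smul_mem V c hxV, fun t ht => ?_⟩
    rw [smul_eq_C_mul, eval_mul, eval_C]
    exact mul_nonneg hc (hx t ht)
  -- The face generated by f
  set Fc : Set ℝ[X] := {g | g ∈ Pset ∧ ∃ c : ℝ, 0 ≤ c ∧ c • f - g ∈ Pset} with hFcdef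
  have hface : IsFace Pset Fc := by
    refine ⟨fun g hg => hg.1, ?_, ?_, ?_⟩
    · rintro c hc x ⟨hxP, a, ha, haP⟩
      refine ⟨hPsmul c hc x hxP, c * a, mul_nonneg hc ha, ?_⟩
      have : (c * a) • f - c • x = c • (a • f - x) := by
        rw [smul_sub, mul_smul]
      rw [this]
      exact hPsmul c hc _ haP
    · rintro x ⟨hxP, a, ha, haP⟩ y ⟨hyP, b, hb, hbP⟩
      refine ⟨hPadd x hxP y hyP, a + b, add_nonneg ha hb, ?_⟩
      have : (a + b) • f - (x + y) = (a • f - x) + (b • f - y) := by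
        rw [add_smul]; abel
      rw [this]
      exact hPadd _ haP _ hbP
    · rintro x hx y hy ⟨hxyP, c, hc, hcP⟩
      constructor
      · refine ⟨hx, c, hc, ?_⟩
        have : c • f - x = (c • f - (x + y)) + y := by abel
        rw [this]; exact hPadd _ hcP _ hy
      · refine ⟨hy, c, hc, ?_⟩
        have : c • f - y = (c • f - (x + y)) + x := by abel
        rw [this]; exact hPadd _ hcP _ hx
  have hfPm : f ∈ Pset := ⟨hfV, hfP⟩
  have hfFc : f ∈ Fc := by
    refine ⟨hfPm, 1, zero_le_one, ?_⟩
    have : (1 : ℝ) • f - f = 0 := by rw [one_smul]; ring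
    rw [this]
    exact ⟨zero_mem V, fun t _ => by simp⟩
  have hFsub : F ⊆ Fc := hF.2.2 Fc hface hfFc
  apply Set.Subset.antisymm
  · -- span F ⊆ U
    set U' : Submodule ℝ ℝ[X] := (V ⊓ Polynomial.degreeLE ℝ f.degree) ⊓
      (⨅ s ∈ I, (Ideal.span {(X - C s) ^ rootMultiplicity s f}).restrictScalars ℝ) with hU'
    have hU'mem : ∀ g : ℝ[X], g ∈ U' ↔ (g ∈ V ∧ g.degree ≤ f.degree ∧
        ∀ s ∈ I, (X - C s) ^ (rootMultiplicity s f) ∣ g) := by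
      intro g
      simp only [hU', Submodule.mem_inf, Polynomial.mem_degreeLE, Submodule.mem_iInf,
        Submodule.restrictScalars_mem, Ideal.mem_span_singleton]
      tauto
    have hFU : F ⊆ (U' : Set ℝ[X]) := by
      intro g hg
      obtain ⟨⟨hgV, hgnn⟩, c, hc, hcP⟩ := hFsub hg
      have hsum : g + (c • f - g) = c • f := by ring
      rw [SetLike.mem_coe, hU'mem]
      refine ⟨hgV, deg_le hI hf0 hgnn hcP.2 hsum, fun s hs => ?_⟩
      refine key_dvd hI hs hgnn hcP.2 (n := rootMultiplicity s f) ?_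
      rw [hsum, smul_eq_C_mul]
      exact (f.pow_rootMultiplicity_dvd s).mul_left _
    intro g hg
    have : Submodule.span ℝ F ≤ U' := Submodule.span_le.mpr hFU
    exact (hU'mem g).mp (this hg)
  · -- U ⊆ span F
    rintro g ⟨hgV, hgdeg, hgdvd⟩
    by_cases hg0 : g = 0
    · rw [hg0]; exact Submodule.zero_mem _
    set T : Finset ℝ := f.roots.toFinset.filter (fun s => s ∈ I) with hT
    set w : ℝ[X] := ∏ s ∈ T, (X - C s) ^ rootMultiplicity s f with hw
    have hpairwise : (↑T : Set ℝ).Pairwise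
        (Function.onFun IsCoprime fun s => (X - C s) ^ rootMultiplicity s f) := by
      intro a _ b _ hab
      exact ((pairwise_coprime_X_sub_C (Function.injective_id) hab).pow)
    have hwf : w ∣ f :=
      Finset.prod_dvd_of_coprime hpairwise (fun s _ => f.pow_rootMultiplicity_dvd s)
    have hwg : w ∣ g := Finset.prod_dvd_of_coprime hpairwise
      (fun s hs => hgdvd s (Finset.mem_filter.mp hs).2)
    obtain ⟨q, hq⟩ := hwf
    obtain ⟨g₂, hg₂⟩ := hwg
    have hw0 : w ≠ 0 := by
      rw [hw]
      apply Finset.prod_ne_zero_iff.mpr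
      intro s _
      exact pow_ne_zero _ (X_sub_C_ne_zero s)
    have hq0 : q ≠ 0 := by
      intro h; rw [h, mul_zero] at hq; exact hf0 hq
    have hg₂0 : g₂ ≠ 0 := by
      intro h; rw [h, mul_zero] at hg₂; exact hg0 hg₂
    have hqI : ∀ x ∈ I, q.eval x ≠ 0 := by
      intro x hx hx0
      have hroot : f.eval x = 0 := by
        rw [hq, eval_mul, hx0, mul_zero]
      have hxT : x ∈ T := by
        rw [hT, Finset.mem_filter, Multiset.mem_toFinset, mem_roots hf0]
        exact ⟨hroot, hx⟩
      set m := rootMultiplicity x f with hm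
      set f₁ := f /ₘ (X - C x) ^ m with hf₁
      have hffac : (X - C x) ^ m * f₁ = f := f.pow_mul_divByMonic_rootMultiplicity_eq x
      have hf₁x : f₁.eval x ≠ 0 := eval_divByMonic_pow_rootMultiplicity_ne_zero x hf0
      have hwsplit : w = (X - C x) ^ m * ∏ s ∈ T.erase x, (X - C s) ^ rootMultiplicity s f := by
        rw [hw, ← Finset.mul_prod_erase T _ hxT]
      have hcancel : f₁ = (∏ s ∈ T.erase x, (X - C s) ^ rootMultiplicity s f) * q := by
        apply mul_left_cancel₀ (pow_ne_zero m (X_sub_C_ne_zero x))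
        rw [hffac, ← mul_assoc, ← hwsplit]
        exact hq
      apply hf₁x
      rw [hcancel, eval_mul, hx0, mul_zero]
    have hdeg2 : g₂.degree ≤ q.degree := by
      have h1 : g.natDegree = w.natDegree + g₂.natDegree := by
        rw [hg₂, natDegree_mul hw0 hg₂0]
      have h2 : f.natDegree = w.natDegree + q.natDegree := by
        rw [hq, natDegree_mul hw0 hq0]
      have h3 : g.natDegree ≤ f.natDegree := natDegree_le_natDegree hgdeg
      have h4 : g₂.natDegree ≤ q.natDegree := by omega
      rw [degree_eq_natDegree hg₂0, degree_eq_natDegree hq0]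
      exact_mod_cast h4
    obtain ⟨M, hM, hbd⟩ := bound_on hI g₂ q hqI hdeg2
    have hbound : ∀ x ∈ I, |g.eval x| ≤ M * f.eval x := by
      intro x hx
      have h1 : |g.eval x| = |g₂.eval x| * |w.eval x| := by
        rw [hg₂, eval_mul, abs_mul, mul_comm]
      have h2 : f.eval x = |w.eval x| * |q.eval x| := by
        rw [← abs_of_nonneg (hfP x hx), hq, eval_mul, abs_mul]
      rw [h1, h2]
      have := hbd x hx
      nlinarith [abs_nonneg (w.eval x), abs_nonneg (q.eval x), abs_nonneg (g₂.eval x)]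
    set ε := M⁻¹ with hε
    have hεpos : 0 < ε := inv_pos.mpr hM
    have hεM : ε * M = 1 := inv_mul_cancel₀ (ne_of_gt hM)
    have hplus : f + ε • g ∈ Pset := by
      refine ⟨add_mem hfV (Submodule.smul_mem V ε hgV), fun x hx => ?_⟩
      rw [eval_add, smul_eq_C_mul, eval_mul, eval_C]
      have h1 := hbound x hx
      have h3 : -(M * f.eval x) ≤ g.eval x := by
        have := neg_abs_le (g.eval x); linarith
      have hkey : 0 ≤ ε * (M * f.eval x + g.eval x) :=
        mul_nonneg hεpos.le (by linarith)
      have hexp : ε * (M * f.eval x + g.eval x) = f.eval x + ε * g.eval x := by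
        rw [hε]; field_simp
      linarith
    have hminus : f - ε • g ∈ Pset := by
      refine ⟨sub_mem hfV (Submodule.smul_mem V ε hgV), fun x hx => ?_⟩
      rw [eval_sub, smul_eq_C_mul, eval_mul, eval_C]
      have h1 := hbound x hx
      have h3 : g.eval x ≤ M * f.eval x := by
        have := le_abs_self (g.eval x); linarith
      have hkey : 0 ≤ ε * (M * f.eval x - g.eval x) :=
        mul_nonneg hεpos.le (by linarith)
      have hexp : ε * (M * f.eval x - g.eval x) = f.eval x - ε * g.eval x := by
        rw [hε]; field_simp
      linarith
    have h2f : (2 : ℝ) • f ∈ F := hF.1.2.1 2 (by norm_num) f hF.2.1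
    have hsum2 : (f + ε • g) + (f - ε • g) = (2 : ℝ) • f := by
      rw [two_smul]; abel
    obtain ⟨hA, hB⟩ := hF.1.2.2.2 (f + ε • g) hplus (f - ε • g) hminus (by rw [hsum2]; exact h2f)
    have hAspan : f + ε • g ∈ Submodule.span ℝ F := Submodule.subset_span hA
    have hBspan : f - ε • g ∈ Submodule.span ℝ F := Submodule.subset_span hB
    have hdiff : (f + ε • g) - (f - ε • g) = (2 * ε) • g := by
      rw [mul_smul, two_smul]; abel
    have hmem : (2 * ε) • g ∈ Submodule.span ℝ F := by
      rw [← hdiff]; exact sub_mem hAspan hBspan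
    have h2ε : (2 * ε) ≠ 0 := by positivity
    have : ((2 * ε)⁻¹ * (2 * ε)) • g ∈ Submodule.span ℝ F := by
      rw [mul_smul]; exact Submodule.smul_mem _ _ hmem
    rwa [inv_mul_cancel₀ h2ε, one_smul] at this
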